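/- For n ≥ 1, the number of 132-avoiding permutations of length n with no match of MMP(1,0,1,0) equals 2^{n-1}. -/

import Mathlib

open Finset

/-- σ avoids the classical pattern 132. -/
def avoids132 {n : ℕ} (σ : Equiv.Perm (Fin n)) : Prop :=
  ¬ ∃ i j k : Fin n, i < j ∧ j < k ∧ σ i < σ k ∧ σ k < σ j

/-- position `i` matches the quadrant marked mesh pattern MMP(a,b,c,d) in σ. -/
def mmpMatch {n : ℕ} (a b c d : ℕ) (σ : Equiv.Perm (Fin n)) (i : Fin n) : Prop :=
  a ≤ (Finset.univ.filter fun j => i < j ∧ σ i < σ j).card ∧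
  b ≤ (Finset.univ.filter fun j => j < i ∧ σ i < σ j).card ∧
  c ≤ (Finset.univ.filter fun j => j < i ∧ σ j < σ i).card ∧
  d ≤ (Finset.univ.filter fun j => i < j ∧ σ j < σ i).card

/-- the number of positions of σ matching MMP(a,b,c,d). -/
noncomputable def mmp {n : ℕ} (a b c d : ℕ) (σ : Equiv.Perm (Fin n)) : ℕ :=
  Nat.card {i : Fin n // mmpMatch a b c d σ i}

/-- Auxiliary property: each value is at most one more than its position. -/
def PPaux {n : ℕ} (σ : Equiv.Perm (Fin n)) : Prop := ∀ i : Fin n, (σ i : ℕ) ≤ (i : ℕ) + 1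

lemma pp_decompose {n : ℕ} (p : Fin (n + 1)) (e : Equiv.Perm (Fin n)) :
    PPaux (Equiv.Perm.decomposeFin.symm (p, e)) ↔ ((p : ℕ) ≤ 1 ∧ PPaux e) := by
  constructor
  · intro h
    have hp : (p : ℕ) ≤ 1 := by simpa using h 0
    refine ⟨hp, fun j => ?_⟩
    have hj := h j.succ
    rw [Equiv.Perm.decomposeFin_symm_apply_succ] at hj
    by_cases hep : (e j).succ = p
    · have h2 : ((e j) : ℕ) + 1 = (p : ℕ) := by rw [← hep]; simp
      omega
    · rw [Equiv.swap_apply_of_ne_of_ne (Fin.succ_ne_zero _) hep] at hj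
      simpa using hj
  · rintro ⟨hp, he⟩ i
    induction i using Fin.cases with
    | zero => simpa using hp
    | succ j =>
      rw [Equiv.Perm.decomposeFin_symm_apply_succ]
      by_cases hep : (e j).succ = p
      · rw [hep, Equiv.swap_apply_right]
        simp
      · rw [Equiv.swap_apply_of_ne_of_ne (Fin.succ_ne_zero _) hep]
        have := he j
        simp only [Fin.val_succ]
        omega

lemma card_pp : ∀ n : ℕ, Nat.card {σ : Equiv.Perm (Fin n) // PPaux σ} = 2 ^ (n - 1) := by
  intro n
  induction n with
  | zero =>
    have hall : ∀ σ : Equiv.Perm (Fin 0), PPaux σ := fun σ i => i.elim0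
    rw [Nat.card_congr (Equiv.subtypeUnivEquiv hall)]
    simp [Nat.card_eq_fintype_card]
  | succ m ih =>
    match m, ih with
    | 0, _ =>
      have hall : ∀ σ : Equiv.Perm (Fin 1), PPaux σ := by
        intro σ i
        omega
      rw [Nat.card_congr (Equiv.subtypeUnivEquiv hall)]
      simp [Nat.card_eq_fintype_card]
    | (k + 1), ih =>
      have e1 : {x : Fin (k + 2) × Equiv.Perm (Fin (k + 1)) // (x.1 : ℕ) ≤ 1 ∧ PPaux x.2} ≃
          {σ : Equiv.Perm (Fin (k + 2)) // PPaux σ} :=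
        Equiv.subtypeEquiv Equiv.Perm.decomposeFin.symm
          (fun x => (pp_decompose x.1 x.2).symm)
      have e2 : {x : Fin (k + 2) × Equiv.Perm (Fin (k + 1)) // (x.1 : ℕ) ≤ 1 ∧ PPaux x.2} ≃
          {p : Fin (k + 2) // (p : ℕ) ≤ 1} × {e : Equiv.Perm (Fin (k + 1)) // PPaux e} :=
        Equiv.subtypeProdEquivProd (p := fun p : Fin (k + 2) => (p : ℕ) ≤ 1) (q := PPaux)
      have hp2 : Nat.card {p : Fin (k + 2) // (p : ℕ) ≤ 1} = 2 := by
        rw [Nat.card_eq_fintype_card, Fintype.card_subtype]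
        have : (univ.filter fun p : Fin (k + 2) => (p : ℕ) ≤ 1) = {0, 1} := by
          ext p
          simp only [Finset.mem_filter, Finset.mem_univ, true_and, Finset.mem_insert,
            Finset.mem_singleton, Fin.ext_iff, Fin.val_zero, Fin.val_one]
          omega
        rw [this, Finset.card_pair]
        simp [Fin.ext_iff]
      rw [← Nat.card_congr e1, Nat.card_congr e2, Nat.card_prod, hp2, ih]
      simp [pow_succ]
      ring

lemma mmp0_iff {n : ℕ} (σ : Equiv.Perm (Fin n)) :
    mmp 1 0 1 0 σ = 0 ↔ ∀ i : Fin n, ¬ mmpMatch 1 0 1 0 σ i := by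
  constructor
  · intro h i hi
    have h1 : Nonempty {i : Fin n // mmpMatch 1 0 1 0 σ i} := ⟨⟨i, hi⟩⟩
    have h2 := Nat.card_pos (α := {i : Fin n // mmpMatch 1 0 1 0 σ i})
    unfold mmp at h
    omega
  · intro h
    have : IsEmpty {i : Fin n // mmpMatch 1 0 1 0 σ i} := ⟨fun x => h x.1 x.2⟩
    unfold mmp
    exact Nat.card_of_isEmpty

lemma mmpMatch_iff {n : ℕ} (σ : Equiv.Perm (Fin n)) (i : Fin n) :
    mmpMatch 1 0 1 0 σ i ↔ (∃ j, i < j ∧ σ i < σ j) ∧ ∃ j, j < i ∧ σ j < σ i := by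
  simp [mmpMatch, Finset.one_le_card, Finset.filter_nonempty_iff]

lemma q_iff {n : ℕ} (σ : Equiv.Perm (Fin n)) :
    (avoids132 σ ∧ mmp 1 0 1 0 σ = 0) ↔ ∀ i : Fin n, n ≤ (σ i : ℕ) + (i : ℕ) + 2 := by
  have cardS : ∀ i : Fin n, (univ.filter fun j => σ i < σ j).card = n - 1 - (σ i : ℕ) := by
    intro i
    have himg : (univ.filter fun j => σ i < σ j) = (Finset.Ioi (σ i)).image σ.symm := by
      ext j
      simp only [Finset.mem_filter, Finset.mem_univ, true_and, Finset.mem_image,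
        Finset.mem_Ioi]
      constructor
      · intro h
        exact ⟨σ j, h, σ.symm_apply_apply j⟩
      · rintro ⟨a, ha, rfl⟩
        simpa using ha
    rw [himg, Finset.card_image_of_injective _ σ.symm.injective, Fin.card_Ioi]
  constructor
  · rintro ⟨hav, hm⟩ i
    rw [mmp0_iff] at hm
    -- key: no index has two later larger values (with the larger positions ordered)
    have H : ∀ a b c : Fin n, a < b → b < c → σ a < σ b → σ a < σ c → False := by
      intro a b c hab hbc h1 h2
      rcases lt_trichotomy (σ b) (σ c) with h | h | h
      · exact hm b ((mmpMatch_iff σ b).2 ⟨⟨c, hbc, h⟩, ⟨a, hab, h1⟩⟩)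
      · exact absurd (σ.injective h) (Fin.ne_of_lt hbc)
      · exact hav ⟨a, b, c, hab, hbc, h2, h⟩
    have hSgt : (univ.filter fun j => i < j ∧ σ i < σ j).card ≤ 1 := by
      rw [Finset.card_le_one]
      intro a ha b hb
      simp only [Finset.mem_filter, Finset.mem_univ, true_and] at ha hb
      by_contra hne
      rcases lt_trichotomy a b with h | h | h
      · exact H i a b ha.1 h ha.2 hb.2
      · exact hne h
      · exact H i b a hb.1 h hb.2 ha.2
    have hSlt : (univ.filter fun j => j < i ∧ σ i < σ j).card ≤ (i : ℕ) := by
      calc (univ.filter fun j => j < i ∧ σ i < σ j).card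
          ≤ (Finset.Iio i).card := by
            apply Finset.card_le_card
            intro j hj
            simp only [Finset.mem_filter, Finset.mem_univ, true_and] at hj
            simpa [Finset.mem_Iio] using hj.1
        _ = (i : ℕ) := Fin.card_Iio i
    have hsplit : (univ.filter fun j => σ i < σ j) =
        (univ.filter fun j => j < i ∧ σ i < σ j) ∪
        (univ.filter fun j => i < j ∧ σ i < σ j) := by
      ext j
      simp only [Finset.mem_filter, Finset.mem_univ, true_and, Finset.mem_union]
      constructor
      · intro h
        rcases lt_trichotomy j i with hj | hj | hj
        · exact Or.inl ⟨hj, h⟩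
        · subst hj; exact absurd h (lt_irrefl _)
        · exact Or.inr ⟨hj, h⟩
      · rintro (⟨_, h⟩ | ⟨_, h⟩) <;> exact h
    have hdisj : Disjoint (univ.filter fun j => j < i ∧ σ i < σ j)
        (univ.filter fun j => i < j ∧ σ i < σ j) := by
      rw [Finset.disjoint_left]
      intro a ha hb
      simp only [Finset.mem_filter, Finset.mem_univ, true_and] at ha hb
      exact absurd (ha.1.trans hb.1) (lt_irrefl _)
    have := cardS i
    rw [hsplit, Finset.card_union_of_disjoint hdisj] at this
    have hlt := (σ i).isLt
    omega
  · intro hI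
    have K : ∀ i : Fin n, (univ.filter fun j => i < j ∧ σ i < σ j).card ≤ 1 := by
      suffices h : ∀ m : ℕ, ∀ i : Fin n, (i : ℕ) < m →
          (univ.filter fun j => i < j ∧ σ i < σ j).card ≤ 1 by
        intro i; exact h ((i : ℕ) + 1) i (Nat.lt_succ_self _)
      intro m
      induction m with
      | zero => intro i hi; omega
      | succ m ih =>
        intro i hi
        by_contra hc
        push_neg at hc
        by_cases hex : ∃ p : Fin n, p < i ∧ σ p < σ i
        · obtain ⟨p, hpi, hσp⟩ := hex
          have hsub : insert i (univ.filter fun j => i < j ∧ σ i < σ j) ⊆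
              (univ.filter fun j => p < j ∧ σ p < σ j) := by
            intro j hj
            simp only [Finset.mem_insert, Finset.mem_filter, Finset.mem_univ, true_and] at hj ⊢
            rcases hj with rfl | ⟨h1, h2⟩
            · exact ⟨hpi, hσp⟩
            · exact ⟨hpi.trans h1, hσp.trans h2⟩
          have hnotmem : i ∉ (univ.filter fun j => i < j ∧ σ i < σ j) := by
            simp
          have h3 : (insert i (univ.filter fun j => i < j ∧ σ i < σ j)).card =
              (univ.filter fun j => i < j ∧ σ i < σ j).card + 1 :=
            Finset.card_insert_of_notMem hnotmem
          have h4 := Finset.card_le_card hsub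
          have h5 := ih p (by have := hpi; omega)
          omega
        · push_neg at hex
          have hall : ∀ p : Fin n, p < i → σ i < σ p := by
            intro p hp
            rcases lt_trichotomy (σ p) (σ i) with h | h | h
            · exact absurd h (not_lt.mpr (hex p hp))
            · exact absurd (σ.injective h) (Fin.ne_of_lt hp)
            · exact h
          have hsub : (Finset.Iio i) ∪ (univ.filter fun j => i < j ∧ σ i < σ j) ⊆
              univ.filter fun j => σ i < σ j := by
            intro j hj
            simp only [Finset.mem_union, Finset.mem_Iio, Finset.mem_filter, Finset.mem_univ,
              true_and] at hj ⊢
            rcases hj with hj | hj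
            · exact hall j hj
            · exact hj.2
          have hdisj : Disjoint (Finset.Iio i) (univ.filter fun j => i < j ∧ σ i < σ j) := by
            rw [Finset.disjoint_left]
            intro a ha hb
            simp only [Finset.mem_Iio] at ha
            simp only [Finset.mem_filter, Finset.mem_univ, true_and] at hb
            exact absurd (ha.trans hb.1) (lt_irrefl _)
          have h4 := Finset.card_le_card hsub
          rw [Finset.card_union_of_disjoint hdisj, Fin.card_Iio] at h4
          have h5 := cardS i
          have h6 := hI i
          have hlt := (σ i).isLt
          omega
    constructor
    · rintro ⟨i, j, k, hij, hjk, h1, h2⟩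
      have hj : j ∈ (univ.filter fun l => i < l ∧ σ i < σ l) := by
        simp only [Finset.mem_filter, Finset.mem_univ, true_and]
        exact ⟨hij, h1.trans h2⟩
      have hk : k ∈ (univ.filter fun l => i < l ∧ σ i < σ l) := by
        simp only [Finset.mem_filter, Finset.mem_univ, true_and]
        exact ⟨hij.trans hjk, h1⟩
      have := Finset.card_le_one.mp (K i) j hj k hk
      exact absurd this (Fin.ne_of_lt hjk)
    · rw [mmp0_iff]
      intro i hi
      rw [mmpMatch_iff] at hi
      obtain ⟨⟨k, hik, hσk⟩, ⟨j, hji, hσj⟩⟩ := hi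
      have hi' : i ∈ (univ.filter fun l => j < l ∧ σ j < σ l) := by
        simp only [Finset.mem_filter, Finset.mem_univ, true_and]
        exact ⟨hji, hσj⟩
      have hk' : k ∈ (univ.filter fun l => j < l ∧ σ j < σ l) := by
        simp only [Finset.mem_filter, Finset.mem_univ, true_and]
        exact ⟨hji.trans hik, hσj.trans hσk⟩
      have := Finset.card_le_one.mp (K j) i hi' k hk'
      exact absurd this (Fin.ne_of_lt hik)

theorem stmt6 (n : ℕ) (hn : 1 ≤ n) :
    Nat.card {σ : Equiv.Perm (Fin n) // avoids132 σ ∧ mmp 1 0 1 0 σ = 0} =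
      2 ^ (n - 1) := by
  have e1 : {σ : Equiv.Perm (Fin n) // avoids132 σ ∧ mmp 1 0 1 0 σ = 0} ≃
      {σ : Equiv.Perm (Fin n) // ∀ i : Fin n, n ≤ (σ i : ℕ) + (i : ℕ) + 2} :=
    Equiv.subtypeEquivRight (fun σ => q_iff σ)
  have e2 : {σ : Equiv.Perm (Fin n) // ∀ i : Fin n, n ≤ (σ i : ℕ) + (i : ℕ) + 2} ≃
      {σ : Equiv.Perm (Fin n) // PPaux σ} := by
    refine Equiv.subtypeEquiv (Equiv.mulLeft (Fin.revPerm : Equiv.Perm (Fin n))) (fun σ => ?_)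
    constructor
    · intro h i
      have := h i
      have hlt := (σ i).isLt
      simp only [Equiv.coe_mulLeft, Equiv.Perm.mul_apply, Fin.revPerm_apply, Fin.val_rev]
      omega
    · intro h i
      have := h i
      have hlt := (σ i).isLt
      simp only [Equiv.coe_mulLeft, Equiv.Perm.mul_apply, Fin.revPerm_apply, Fin.val_rev] at this
      omega
  rw [Nat.card_congr (e1.trans e2), card_pp]
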